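/- arXiv:1406.1901 — 2 statements merged into one kernel-verified Lean document; each statement's English description precedes it below -/
import Mathlib

section
/- Let (X, ρ) be a metric space, p ≥ 1, m a positive integer, and ρ_m a metric on X^m satisfying ρ_m((x_1,...,x_m),(y_1,...,y_m)) ≤ (∑_{i=1}^m ρ(x_i,y_i)^p)^{1/p} for all tuples. Then the p-Wasserstein distance (with respect to ρ_m) between the product measures satisfies W_{ρ_m,p}(μ^{⊗m}, ν^{⊗m}) ≤ m^{1/p} W_{ρ,p}(μ, ν) for all probability measures μ, ν on X. -/
open MeasureTheory ENNReal

/-- The p-Wasserstein "distance" (to the power 1, in ℝ≥0∞) associated to a cost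
function `d`: infimum over couplings of the p-th root of the p-cost. -/
noncomputable def Wp {α : Type*} [MeasurableSpace α] (d : α → α → ℝ≥0∞) (p : ℝ)
    (μ ν : Measure α) : ℝ≥0∞ :=
  ⨅ (π : Measure (α × α)) (_ : π.map Prod.fst = μ) (_ : π.map Prod.snd = ν),
    (∫⁻ z, d z.1 z.2 ^ p ∂π) ^ (1 / p)

lemma map_eval_aux {Y : Type*} [MeasurableSpace Y] {m : ℕ}
    (π : Measure Y) [IsProbabilityMeasure π] (i : Fin m) :
    (Measure.pi fun _ : Fin m => π).map (fun f => f i) = π := by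
  ext s hs
  rw [Measure.map_apply (measurable_pi_apply i) hs]
  have hpre : (fun f : Fin m → Y => f i) ⁻¹' s
      = Set.pi Set.univ (fun j => if j = i then s else Set.univ) := by
    ext f
    simp only [Set.mem_preimage, Set.mem_pi, Set.mem_univ, forall_true_left]
    constructor
    · intro h j; by_cases hj : j = i <;> simp [hj, h]
    · intro h; have := h i; simpa using this
  rw [hpre, Measure.pi_pi]
  rw [Finset.prod_eq_single i (fun j _ hj => by simp [hj]) (by simp)]
  simp

/-- If every measurable function below `G` has zero integral w.r.t. `π`, then every
measurable function below `f ↦ ∑ i, G (f i)` has zero integral w.r.t. `π^⊗n`. -/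
lemma lemB {Z : Type*} [MeasurableSpace Z] (π : Measure Z) [IsProbabilityMeasure π]
    (G : Z → ℝ≥0∞)
    (hP : ∀ v : Z → ℝ≥0∞, Measurable v → (∀ z, v z ≤ G z) → ∫⁻ z, v z ∂π = 0) :
    ∀ (n : ℕ) (w : (Fin n → Z) → ℝ≥0∞), Measurable w →
      (∀ f, w f ≤ ∑ i, G (f i)) →
      ∫⁻ f, w f ∂(Measure.pi fun _ : Fin n => π) = 0 := by
  intro n
  induction n with
  | zero =>
      intro w hw hble
      have hz : ∀ f, w f = 0 := fun f => le_antisymm (by simpa using hble f) zero_le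
      simp [hz]
  | succ n ih =>
      intro w hw hble
      set e := MeasurableEquiv.piFinSuccAbove (fun _ : Fin (n + 1) => Z) 0 with he
      have hmp := measurePreserving_piFinSuccAbove (fun _ : Fin (n + 1) => π) 0
      have hmps := MeasurePreserving.symm e hmp
      set W : Z × (Fin n → Z) → ℝ≥0∞ := fun q => w (e.symm q) with hWdef
      have hW : Measurable W := hw.comp e.symm.measurable
      have hWle : ∀ z y, W (z, y) ≤ G z + ∑ i, G (y i) := by
        intro z y
        refine (hble (e.symm (z, y))).trans (le_of_eq ?_)
        have hz : (e.symm (z, y) : Fin (n + 1) → Z) = Fin.insertNth 0 z y := rfl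
        have htail : ∀ j : Fin n,
            Fin.insertNth (α := fun _ : Fin (n + 1) => Z) 0 z y j.succ = y j := by
          intro j
          have := Fin.insertNth_apply_succAbove (α := fun _ : Fin (n + 1) => Z)
            (0 : Fin (n + 1)) z y j
          simpa [Fin.succAbove_zero] using this
        rw [hz, Fin.sum_univ_succ]
        simp [htail]
      have h1 : ∫⁻ f, w f ∂(Measure.pi fun _ : Fin (n + 1) => π)
          = ∫⁻ q, W q ∂(π.prod (Measure.pi fun _ : Fin n => π)) :=
        (hmps.lintegral_comp hw).symm
      rw [h1, lintegral_prod _ hW.aemeasurable]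
      have hφm : Measurable fun z => ∫⁻ y, W (z, y) ∂(Measure.pi fun _ : Fin n => π) :=
        hW.lintegral_prod_right'
      refine hP _ hφm fun z => ?_
      have hvm : Measurable fun y => W (z, y) - G z :=
        (hW.comp measurable_prodMk_left).sub measurable_const
      have hv := ih (fun y => W (z, y) - G z) hvm
        (fun y => tsub_le_iff_left.mpr (hWle z y))
      calc ∫⁻ y, W (z, y) ∂(Measure.pi fun _ : Fin n => π)
          ≤ ∫⁻ y, G z + (W (z, y) - G z) ∂(Measure.pi fun _ : Fin n => π) :=
            lintegral_mono fun y => le_add_tsub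
        _ = G z := by
            rw [lintegral_add_left measurable_const, hv, add_zero, lintegral_const,
              measure_univ, mul_one]

theorem stmt1 {X : Type*} [MetricSpace X] [MeasurableSpace X] [BorelSpace X]
    (p : ℝ) (hp : 1 ≤ p) (m : ℕ) (hm : 0 < m)
    (dm : (Fin m → X) → (Fin m → X) → ℝ≥0∞)
    (hself : ∀ x, dm x x = 0) (hsymm : ∀ x y, dm x y = dm y x)
    (htri : ∀ x y z, dm x z ≤ dm x y + dm y z)
    (hdom : ∀ x y, dm x y ≤ (∑ i, edist (x i) (y i) ^ p) ^ (1 / p))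
    (μ ν : Measure X) [IsProbabilityMeasure μ] [IsProbabilityMeasure ν] :
    Wp dm p (Measure.pi fun _ => μ) (Measure.pi fun _ => ν)
      ≤ (m : ℝ≥0∞) ^ (1 / p) * Wp (fun x y : X => edist x y) p μ ν := by
  have hp0 : p ≠ 0 := by linarith
  have hp00 : (0 : ℝ) ≤ p := by linarith
  have hip : (0 : ℝ) ≤ 1 / p := by positivity
  have hip' : (0 : ℝ) < 1 / p := by positivity
  have hm' : (m : ℝ≥0∞) ≠ 0 := Nat.cast_ne_zero.mpr hm.ne'
  have hc0 : ((m : ℝ≥0∞) ^ (1 / p)) ≠ 0 := by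
    intro h
    rcases ENNReal.rpow_eq_zero_iff.mp h with ⟨h1, _⟩ | ⟨h1, _⟩
    · exact hm' h1
    · exact (ENNReal.natCast_ne_top m) h1
  have hctop : ((m : ℝ≥0∞) ^ (1 / p)) ≠ ∞ :=
    ENNReal.rpow_ne_top_of_nonneg hip (by simp)
  have key : ∀ π : Measure (X × X), π.map Prod.fst = μ → π.map Prod.snd = ν →
      Wp dm p (Measure.pi fun _ => μ) (Measure.pi fun _ => ν)
        ≤ (m : ℝ≥0∞) ^ (1 / p) * (∫⁻ z, edist z.1 z.2 ^ p ∂π) ^ (1 / p) := by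
    intro π h1 h2
    set h : X × X → ℝ≥0∞ := fun z => edist z.1 z.2 ^ p with hhdef
    by_cases hC : ∫⁻ z, h z ∂π = ∞
    · rw [hC, ENNReal.top_rpow_of_pos hip', ENNReal.mul_top hc0]
      exact le_top
    have hπ : IsProbabilityMeasure π := by
      constructor
      have : π.map Prod.fst Set.univ = 1 := by rw [h1]; exact measure_univ
      rwa [Measure.map_apply measurable_fst MeasurableSet.univ, Set.preimage_univ] at this
    set Φ : (Fin m → X × X) → (Fin m → X) × (Fin m → X) :=
      fun f => (fun i => (f i).1, fun i => (f i).2) with hΦdef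
    have hΦ : Measurable Φ :=
      Measurable.prod
        (measurable_pi_lambda _ fun i => (measurable_pi_apply i).fst)
        (measurable_pi_lambda _ fun i => (measurable_pi_apply i).snd)
    set PP : Measure ((Fin m → X) × (Fin m → X)) :=
      (Measure.pi fun _ : Fin m => π).map Φ with hPPdef
    have hfst : PP.map Prod.fst = Measure.pi fun _ => μ := by
      rw [hPPdef, Measure.map_map measurable_fst hΦ]
      exact (measurePreserving_pi (fun _ : Fin m => π) (fun _ => μ)
        (fun _ => ⟨measurable_fst, h1⟩)).map_eq
    have hsnd : PP.map Prod.snd = Measure.pi fun _ => ν := by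
      rw [hPPdef, Measure.map_map measurable_snd hΦ]
      exact (measurePreserving_pi (fun _ : Fin m => π) (fun _ => ν)
        (fun _ => ⟨measurable_snd, h2⟩)).map_eq
    -- measurable minorants
    obtain ⟨g, gmeas, gle, gint⟩ := exists_measurable_le_lintegral_eq π h
    obtain ⟨u, umeas, ule, uint⟩ :=
      exists_measurable_le_lintegral_eq PP (fun z => dm z.1 z.2 ^ p)
    have hP : ∀ v : X × X → ℝ≥0∞, Measurable v → (∀ z, v z ≤ h z - g z) →
        ∫⁻ z, v z ∂π = 0 := by
      intro v hv hvle
      have hgv : ∀ z, g z + v z ≤ h z := fun z => by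
        calc g z + v z ≤ g z + (h z - g z) := add_le_add_right (hvle z) _
          _ = h z := add_tsub_cancel_of_le (gle z)
      have hsum : ∫⁻ z, g z ∂π + ∫⁻ z, v z ∂π ≤ ∫⁻ z, h z ∂π := by
        rw [← lintegral_add_left gmeas]
        exact lintegral_mono hgv
      rw [← gint] at hsum
      have hgtop : (∫⁻ z, h z ∂π) ≠ ∞ := hC
      have : ∫⁻ z, v z ∂π ≤ 0 := by
        have h2 : (∫⁻ z, h z ∂π) + ∫⁻ z, v z ∂π ≤ (∫⁻ z, h z ∂π) + 0 := by
          simpa using hsum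
        exact ENNReal.le_of_add_le_add_left hgtop h2
      exact le_antisymm this zero_le
    have hdomΦ : ∀ f : Fin m → X × X, u (Φ f) ≤ ∑ i, h (f i) := fun f => by
      calc u (Φ f) ≤ dm (Φ f).1 (Φ f).2 ^ p := ule _
        _ ≤ ((∑ i, edist ((Φ f).1 i) ((Φ f).2 i) ^ p) ^ (1 / p)) ^ p :=
            ENNReal.rpow_le_rpow (hdom _ _) hp00
        _ = ∑ i, h (f i) := by
            rw [← ENNReal.rpow_mul, one_div, inv_mul_cancel₀ hp0, ENNReal.rpow_one]
    set s : (Fin m → X × X) → ℝ≥0∞ := fun f => ∑ i, g (f i) with hsdef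
    have hsm : Measurable s :=
      Finset.measurable_sum _ fun i _ => gmeas.comp (measurable_pi_apply i)
    have hwm : Measurable fun f => u (Φ f) - s f := (umeas.comp hΦ).sub hsm
    have hwle : ∀ f, u (Φ f) - s f ≤ ∑ i, (h (f i) - g (f i)) := fun f => by
      refine tsub_le_iff_right.mpr ?_
      calc u (Φ f) ≤ ∑ i, h (f i) := hdomΦ f
        _ ≤ ∑ i, ((h (f i) - g (f i)) + g (f i)) :=
            Finset.sum_le_sum fun i _ => le_tsub_add
        _ = (∑ i, (h (f i) - g (f i))) + s f := by rw [Finset.sum_add_distrib]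
    have hzero := lemB π (fun z => h z - g z) hP m _ hwm hwle
    have hmain : ∫⁻ f, u (Φ f) ∂(Measure.pi fun _ : Fin m => π)
        ≤ m * ∫⁻ z, h z ∂π := by
      calc ∫⁻ f, u (Φ f) ∂(Measure.pi fun _ : Fin m => π)
          ≤ ∫⁻ f, s f + (u (Φ f) - s f) ∂(Measure.pi fun _ : Fin m => π) :=
            lintegral_mono fun f => le_add_tsub
        _ = ∫⁻ f, s f ∂(Measure.pi fun _ : Fin m => π) := by
            rw [lintegral_add_left hsm, hzero, add_zero]
        _ = ∑ i, ∫⁻ f, g (f i) ∂(Measure.pi fun _ : Fin m => π) :=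
            lintegral_finset_sum _ fun i _ => gmeas.comp (measurable_pi_apply i)
        _ = ∑ _i : Fin m, ∫⁻ z, g z ∂π :=
            Finset.sum_congr rfl fun i _ => by
              calc ∫⁻ f, g (f i) ∂(Measure.pi fun _ : Fin m => π)
                  = ∫⁻ z, g z ∂((Measure.pi fun _ : Fin m => π).map (fun f => f i)) :=
                    (lintegral_map gmeas (measurable_pi_apply i)).symm
                _ = ∫⁻ z, g z ∂π := by rw [map_eval_aux π i]
        _ = m * ∫⁻ z, g z ∂π := by
            rw [Finset.sum_const, Finset.card_univ, Fintype.card_fin, nsmul_eq_mul]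
        _ = m * ∫⁻ z, h z ∂π := by rw [← gint]
    have hcost : (∫⁻ z, dm z.1 z.2 ^ p ∂PP) ≤ m * ∫⁻ z, h z ∂π := by
      rw [uint, hPPdef, lintegral_map umeas hΦ]
      exact hmain
    calc Wp dm p (Measure.pi fun _ => μ) (Measure.pi fun _ => ν)
        ≤ (∫⁻ z, dm z.1 z.2 ^ p ∂PP) ^ (1 / p) :=
          iInf_le_of_le PP (iInf_le_of_le hfst (iInf_le _ hsnd))
      _ ≤ ((m : ℝ≥0∞) * ∫⁻ z, h z ∂π) ^ (1 / p) :=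
          ENNReal.rpow_le_rpow hcost hip
      _ = (m : ℝ≥0∞) ^ (1 / p) * (∫⁻ z, h z ∂π) ^ (1 / p) :=
          ENNReal.mul_rpow_of_nonneg _ _ hip
  conv_rhs => rw [Wp]
  rw [ENNReal.mul_iInf_of_ne hc0 hctop]
  refine le_iInf fun π => ?_
  rw [ENNReal.mul_iInf_of_ne hc0 hctop]
  refine le_iInf fun h1 => ?_
  rw [ENNReal.mul_iInf_of_ne hc0 hctop]
  exact le_iInf fun h2 => key π h1 h2
end

section
/- Let a > 0, b > 0, m ≥ 2 an integer, and set r_m = 2(log m / (a m))^{1/b}. Then ∫_{r > r_m} (4^b/(a r^b)) exp(− m (a/2^b) r^b) dr ≤ 2 C(a,b) (log m / (a m))^{1/b} / (log m)^2 for some constant C(a,b) > 0 depending only on a and b. -/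
open MeasureTheory Set Real

-- (1+x)^n ≤ 2^n (1 + n!/θ^n) exp(θ x)  for x ≥ 0, θ > 0
lemma aux_pow_le_exp (n : ℕ) {θ x : ℝ} (hθ : 0 < θ) (hx : 0 ≤ x) :
    (1 + x) ^ n ≤ 2 ^ n * (1 + n.factorial / θ ^ n) * Real.exp (θ * x) := by
  have h1 : (1 + x) ^ n ≤ 2 ^ n * (1 + x ^ n) := by
    calc (1 + x) ^ n ≤ (2 * max 1 x) ^ n := by
          apply pow_le_pow_left₀ (by linarith)
          rcases le_total x 1 with h | h
          · simp [max_eq_left h]; linarith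
          · simp [max_eq_right h]; linarith
      _ = 2 ^ n * (max 1 x) ^ n := by rw [mul_pow]
      _ ≤ 2 ^ n * (1 + x ^ n) := by
          apply mul_le_mul_of_nonneg_left _ (by positivity)
          rcases le_total x 1 with h | h
          · simp [max_eq_left h]; positivity
          · rw [max_eq_right h]; nlinarith [pow_le_pow_left₀ (by norm_num : (0:ℝ) ≤ 1) h n]
  have h2 : x ^ n ≤ n.factorial / θ ^ n * Real.exp (θ * x) := by
    have := Real.pow_div_factorial_le_exp (x := θ * x) (mul_nonneg hθ.le hx) n
    have hfac : (0:ℝ) < n.factorial := by positivity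
    rw [div_le_iff₀ hfac] at this
    rw [div_mul_eq_mul_div, le_div_iff₀ (by positivity)]
    calc x ^ n * θ ^ n = (θ * x) ^ n := by rw [mul_pow]; ring
      _ ≤ Real.exp (θ * x) * n.factorial := this
      _ = n.factorial * Real.exp (θ * x) := by ring
  have he : (1:ℝ) ≤ Real.exp (θ * x) := Real.one_le_exp (by positivity)
  calc (1 + x) ^ n ≤ 2 ^ n * (1 + x ^ n) := h1
    _ ≤ 2 ^ n * (Real.exp (θ * x) + n.factorial / θ ^ n * Real.exp (θ * x)) := by
        apply mul_le_mul_of_nonneg_left _ (by positivity)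
        exact add_le_add he h2
    _ = 2 ^ n * (1 + n.factorial / θ ^ n) * Real.exp (θ * x) := by ring

-- tail of incomplete Gamma integral
lemma tail_bound (s L : ℝ) (hlog : Real.log 2 ≤ L) (hL : 0 < L) :
    (∫ u in Ioi L, u ^ s * Real.exp (-u)) ≤
      2 * (2 ^ ⌈s⌉₊ * (1 + (⌈s⌉₊.factorial : ℝ) / (Real.log 2 / 2) ^ ⌈s⌉₊)) * L ^ s
        * Real.exp (-L) := by
  have hlog2 : 0 < Real.log 2 := Real.log_pos one_lt_two
  set n := ⌈s⌉₊ with hn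
  set A : ℝ := 2 ^ n * (1 + (n.factorial : ℝ) / (Real.log 2 / 2) ^ n) with hA
  have hApos : 0 < A := by positivity
  set M : ℝ := A * L ^ s * Real.exp (-(1/2) * L) with hM
  have hMpos : 0 < M := by positivity
  have hint : IntegrableOn (fun u : ℝ => M * Real.exp (-(1/2) * u)) (Ioi L) := by
    exact (exp_neg_integrableOn_Ioi L (by norm_num : (0:ℝ) < 1/2)).const_mul M
  have hpt : ∀ u ∈ Ioi L, u ^ s * Real.exp (-u) ≤ M * Real.exp (-(1/2) * u) := by
    intro u hu
    have hu' : L < u := hu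
    have hu0 : 0 < u := hL.trans hu'
    have h1 : u ^ s = L ^ s * (u / L) ^ s := by
      rw [← Real.mul_rpow hL.le (by positivity)]
      congr 1
      field_simp
    have h2 : (u / L) ^ s ≤ (u / L) ^ (n : ℝ) :=
      Real.rpow_le_rpow_of_exponent_le (by rw [le_div_iff₀ hL]; linarith) (Nat.le_ceil s)
    have h3 : (u / L) ^ (n : ℝ) = (u / L) ^ n := Real.rpow_natCast _ n
    have h4 : u / L ≤ 1 + (u - L) / Real.log 2 := by
      have : u / L = 1 + (u - L) / L := by field_simp; ring
      rw [this]
      have : (u - L) / L ≤ (u - L) / Real.log 2 :=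
        div_le_div_of_nonneg_left (by linarith) hlog2 hlog
      linarith
    have h5 : (u / L) ^ n ≤ (1 + (u - L) / Real.log 2) ^ n :=
      pow_le_pow_left₀ (by positivity) h4 n
    have h6 := aux_pow_le_exp n (θ := Real.log 2 / 2)
      (by positivity) (x := (u - L) / Real.log 2) (div_nonneg (by linarith) hlog2.le)
    have h7 : Real.log 2 / 2 * ((u - L) / Real.log 2) = (u - L) / 2 := by
      field_simp
    rw [h7] at h6
    have h8 : (u / L) ^ s ≤ A * Real.exp ((u - L) / 2) := by
      calc (u / L) ^ s ≤ (u / L) ^ (n:ℝ) := h2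
        _ = (u / L) ^ n := h3
        _ ≤ (1 + (u - L) / Real.log 2) ^ n := h5
        _ ≤ A * Real.exp ((u - L) / 2) := h6
    have hLs : (0:ℝ) ≤ L ^ s := Real.rpow_nonneg hL.le s
    calc u ^ s * Real.exp (-u) = L ^ s * (u / L) ^ s * Real.exp (-u) := by rw [h1]
      _ ≤ L ^ s * (A * Real.exp ((u - L) / 2)) * Real.exp (-u) := by
          apply mul_le_mul_of_nonneg_right _ (Real.exp_nonneg _)
          exact mul_le_mul_of_nonneg_left h8 hLs
      _ = M * Real.exp (-(1/2) * u) := by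
          have hE : Real.exp ((u - L) / 2) * Real.exp (-u)
              = Real.exp (-(1/2) * L) * Real.exp (-(1/2) * u) := by
            rw [← Real.exp_add, ← Real.exp_add]
            congr 1
            ring
          rw [hM]
          linear_combination (L ^ s * A) * hE
  have hmono : (∫ u in Ioi L, u ^ s * Real.exp (-u))
      ≤ ∫ u in Ioi L, M * Real.exp (-(1/2) * u) := by
    apply integral_mono_of_nonneg
    · filter_upwards [ae_restrict_mem measurableSet_Ioi] with u hu
      have hu0 : 0 < u := hL.trans hu
      positivity
    · exact hint
    · filter_upwards [ae_restrict_mem measurableSet_Ioi] with u hu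
      exact hpt u hu
  have hI : (∫ u in Ioi L, Real.exp (-(1/2) * u)) = 2 * Real.exp (-(1/2) * L) := by
    have h := integral_comp_mul_left_Ioi (fun x => Real.exp (-x)) L
      (by norm_num : (0:ℝ) < (1/2:ℝ))
    simp only [integral_exp_neg_Ioi, smul_eq_mul, ← neg_mul] at h
    rw [h]
    norm_num
  calc (∫ u in Ioi L, u ^ s * Real.exp (-u)) ≤ ∫ u in Ioi L, M * Real.exp (-(1/2) * u) := hmono
    _ = M * (2 * Real.exp (-(1/2) * L)) := by rw [integral_const_mul, hI]
    _ = 2 * A * L ^ s * (Real.exp (-(1/2) * L) * Real.exp (-(1/2) * L)) := by rw [hM]; ring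
    _ = 2 * A * L ^ s * Real.exp (-L) := by rw [← Real.exp_add]; congr 1; ring
    _ = 2 * (2 ^ n * (1 + (n.factorial : ℝ) / (Real.log 2 / 2) ^ n)) * L ^ s * Real.exp (-L) := by
        rw [hA]

theorem stmt6 (a b : ℝ) (ha : 0 < a) (hb : 0 < b) :
    ∃ C > (0 : ℝ), ∀ m : ℕ, 2 ≤ m →
      (∫ r in Set.Ioi (2 * (Real.log m / (a * m)) ^ (1 / b)),
          4 ^ b / (a * r ^ b) * Real.exp (-(m : ℝ) * (a / 2 ^ b) * r ^ b))
        ≤ 2 * C * (Real.log m / (a * m)) ^ (1 / b) / (Real.log m) ^ 2 := by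
  have hlog2 : 0 < Real.log 2 := Real.log_pos one_lt_two
  set n : ℕ := ⌈1/b - 2⌉₊ with hn
  set A : ℝ := 2 ^ n * (1 + (n.factorial : ℝ) / (Real.log 2 / 2) ^ n) with hA
  have hApos : 0 < A := by positivity
  have h2b : (0:ℝ) < 2 ^ b := Real.rpow_pos_of_pos two_pos b
  refine ⟨2 ^ b * 2 * A / b, by positivity, ?_⟩
  intro m hm
  have hm1 : (1:ℝ) < m := by exact_mod_cast lt_of_lt_of_le one_lt_two hm
  have hm0 : (0:ℝ) < m := by linarith
  have hm2 : (2:ℝ) ≤ m := by exact_mod_cast hm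
  set L := Real.log m with hLdef
  have hL : 0 < L := Real.log_pos hm1
  have hlogle : Real.log 2 ≤ L := Real.log_le_log two_pos hm2
  set c : ℝ := m * (a / 2 ^ b) with hcdef
  have hc : 0 < c := by positivity
  set t : ℝ := (L / (a * m)) ^ (1/b) with htdef
  have ht : 0 < t := Real.rpow_pos_of_pos (by positivity) _
  set R : ℝ := 2 * t with hRdef
  have hR : 0 < R := by positivity
  have hRb : R ^ b = 2 ^ b * (L / (a * m)) := by
    rw [hRdef, Real.mul_rpow (by norm_num) ht.le, htdef, ← Real.rpow_mul (by positivity),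
      one_div, inv_mul_cancel₀ hb.ne', Real.rpow_one]
  have hcRb : c * R ^ b = L := by
    rw [hRb, hcdef]
    field_simp
  -- change of variables
  have himg : (fun x : ℝ => c * x ^ b) '' Ioi R = Ioi L := by
    ext u
    constructor
    · rintro ⟨x, hx, rfl⟩
      have hx' : R < x := hx
      have : R ^ b < x ^ b := Real.rpow_lt_rpow hR.le hx' hb
      have : c * R ^ b < c * x ^ b := by
        exact mul_lt_mul_of_pos_left this hc
      rw [hcRb] at this
      exact this
    · intro hu
      have hu' : L < u := hu
      have hu0 : 0 < u := hL.trans hu'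
      refine ⟨(u / c) ^ (1/b), ?_, ?_⟩
      · have h1 : R ^ b < u / c := by
          rw [lt_div_iff₀ hc, mul_comm]
          rw [hcRb]
          exact hu'
        have h2 : (R ^ b) ^ (1/b) < (u / c) ^ (1/b) :=
          Real.rpow_lt_rpow (Real.rpow_nonneg hR.le b) h1 (by positivity)
        rwa [← Real.rpow_mul hR.le, mul_one_div_cancel hb.ne', Real.rpow_one] at h2
      · show c * ((u / c) ^ (1/b)) ^ b = u
        rw [← Real.rpow_mul (by positivity), one_div, inv_mul_cancel₀ hb.ne',
          Real.rpow_one, mul_div_cancel₀ _ hc.ne']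
  have hderiv : ∀ x ∈ Ioi R, HasDerivWithinAt (fun x : ℝ => c * x ^ b)
      (c * (b * x ^ (b - 1))) (Ioi R) x := by
    intro x hx
    have hx0 : (0:ℝ) < x := hR.trans hx
    exact ((Real.hasDerivAt_rpow_const (Or.inl hx0.ne')).const_mul c).hasDerivWithinAt
  have hinj : Set.InjOn (fun x : ℝ => c * x ^ b) (Ioi R) := by
    have hsm : StrictMonoOn (fun x : ℝ => c * x ^ b) (Ioi R) := by
      intro x hx y hy hxy
      exact mul_lt_mul_of_pos_left
        (Real.rpow_lt_rpow (le_of_lt (hR.trans hx)) hxy hb) hc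
    exact hsm.injOn
  set Kc : ℝ := 4 ^ b / (a * b) * c ^ (1 - 1/b) with hKc
  have hKcpos : 0 < Kc := by
    have : (0:ℝ) < (4:ℝ) ^ b := Real.rpow_pos_of_pos (by norm_num) b
    have := Real.rpow_pos_of_pos hc (1 - 1/b)
    positivity
  have hCoV : (∫ r in Ioi R, 4 ^ b / (a * r ^ b) * Real.exp (-(m:ℝ) * (a / 2 ^ b) * r ^ b))
      = ∫ u in Ioi L, Kc * (u ^ (1/b - 2) * Real.exp (-u)) := by
    rw [← himg, integral_image_eq_integral_abs_deriv_smul measurableSet_Ioi hderiv hinj]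
    apply setIntegral_congr_fun measurableSet_Ioi
    intro x hx
    have hx0 : (0:ℝ) < x := hR.trans hx
    have hxb : (0:ℝ) < x ^ b := Real.rpow_pos_of_pos hx0 b
    have habs : |c * (b * x ^ (b - 1))| = c * (b * x ^ (b - 1)) := by
      have : (0:ℝ) < x ^ (b-1) := Real.rpow_pos_of_pos hx0 _
      exact abs_of_pos (by positivity)
    have hsplit : (c * x ^ b) ^ (1/b - 2) = c ^ (1/b - 2) * x ^ (1 - 2*b) := by
      rw [Real.mul_rpow hc.le (Real.rpow_nonneg hx0.le b), ← Real.rpow_mul hx0.le]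
      congr 2
      field_simp
    have hexp : -(m:ℝ) * (a / 2 ^ b) * x ^ b = -(c * x ^ b) := by
      rw [hcdef]; ring
    have hc3 : c ^ (1 - 1/b) * c ^ (1/b - 2) = c⁻¹ := by
      rw [← Real.rpow_add hc, show (1 - 1/b) + (1/b - 2) = -1 by ring, Real.rpow_neg_one]
    have hx3 : x ^ (b - 1) * x ^ (1 - 2*b) = (x ^ b)⁻¹ := by
      rw [← Real.rpow_add hx0, show (b - 1) + (1 - 2*b) = -b by ring,
        Real.rpow_neg hx0.le]
    have key : |c * (b * x ^ (b - 1))| • (Kc * ((c * x ^ b) ^ (1/b - 2) * Real.exp (-(c * x ^ b))))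
        = 4 ^ b / (a * x ^ b) * Real.exp (-(m:ℝ) * (a / 2 ^ b) * x ^ b) := by
      rw [habs, smul_eq_mul, hsplit, hexp, hKc]
      set E := Real.exp (-(c * x ^ b)) with hE
      calc c * (b * x ^ (b - 1)) * (4 ^ b / (a * b) * c ^ (1 - 1/b) * (c ^ (1/b - 2) * x ^ (1 - 2*b) * E))
          = (c * (c ^ (1 - 1/b) * c ^ (1/b - 2))) * ((x ^ (b-1) * x ^ (1 - 2*b)) * (b * (4 ^ b / (a * b)) * E)) := by
            ring
        _ = (c * c⁻¹) * ((x ^ b)⁻¹ * (b * (4 ^ b / (a * b)) * E)) := by rw [hc3, hx3]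
        _ = 4 ^ b / (a * x ^ b) * E := by
            rw [mul_inv_cancel₀ hc.ne']
            field_simp
    exact key.symm
  -- apply tail bound
  have htail := tail_bound (1/b - 2) L hlogle hL
  have hmain : (∫ r in Ioi R, 4 ^ b / (a * r ^ b) * Real.exp (-(m:ℝ) * (a / 2 ^ b) * r ^ b))
      ≤ Kc * (2 * A * L ^ (1/b - 2) * Real.exp (-L)) := by
    rw [hCoV, integral_const_mul]
    apply mul_le_mul_of_nonneg_left _ hKcpos.le
    calc (∫ u in Ioi L, u ^ (1/b - 2) * Real.exp (-u))
        ≤ 2 * (2 ^ ⌈1/b - 2⌉₊ * (1 + (⌈1/b - 2⌉₊.factorial : ℝ) / (Real.log 2 / 2) ^ ⌈1/b - 2⌉₊))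
          * L ^ (1/b - 2) * Real.exp (-L) := htail
      _ = 2 * A * L ^ (1/b - 2) * Real.exp (-L) := by rw [hA, hn]
  -- final arithmetic
  have hfin : Kc * (2 * A * L ^ (1/b - 2) * Real.exp (-L))
      = 2 * (2 ^ b * 2 * A / b) * t / L ^ 2 := by
    have e1 : Real.exp (-L) = 1/m := by
      rw [Real.exp_neg, hLdef, Real.exp_log hm0, one_div]
    have hc1b : c ^ (1/b) = (a * m) ^ (1/b) / 2 := by
      have hceq : c = (a * m) / 2 ^ b := by rw [hcdef]; ring
      rw [hceq, Real.div_rpow (by positivity) h2b.le, ← Real.rpow_mul (by norm_num : (0:ℝ) ≤ 2),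
        mul_one_div_cancel hb.ne', Real.rpow_one]
    have e2 : c ^ (1 - 1/b) = c / ((a * m) ^ (1/b) / 2) := by
      rw [Real.rpow_sub hc, Real.rpow_one, hc1b]
    have e3 : L ^ (1/b - 2) = L ^ (1/b) / L ^ 2 := by
      rw [Real.rpow_sub hL]
      congr 1
      rw [show (2:ℝ) = ((2:ℕ):ℝ) by norm_num, Real.rpow_natCast]
    have e4 : t = L ^ (1/b) / (a * m) ^ (1/b) := by
      rw [htdef, Real.div_rpow hL.le (by positivity)]
    have e5 : (4:ℝ) ^ b = 2 ^ b * 2 ^ b := by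
      rw [show (4:ℝ) = 2 * 2 by norm_num, Real.mul_rpow (by norm_num) (by norm_num)]
    have hX : (0:ℝ) < (a * m) ^ (1/b) := Real.rpow_pos_of_pos (by positivity) _
    rw [hKc, e1, e2, e3, e4, e5, hcdef]
    field_simp
  calc (∫ r in Ioi R, 4 ^ b / (a * r ^ b) * Real.exp (-(m:ℝ) * (a / 2 ^ b) * r ^ b))
      ≤ Kc * (2 * A * L ^ (1/b - 2) * Real.exp (-L)) := hmain
    _ = 2 * (2 ^ b * 2 * A / b) * t / L ^ 2 := hfin
end
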